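/- Let N ≥ 1 and h = 1/N, and let D_h = {(ih, jh) : 1 ≤ i ≤ N, 1 ≤ j ≤ N} be the discretized unit square with periodic identification in the first coordinate. Fix an integer r ≥ 2 and a finite nonempty set A⁻_r of points y ∈ ℝ² with ∥y∥ ≤ r and y·e₂ ≤ -1, with positive weights w. Suppose u : (0,1]² → ℝ^d is C² with ∥Hu∥₂ ≤ D uniformly and satisfies ∇u(x)·g* = 0 where g* is the weighted center of mass of A⁻_r. Define u_h on D_h row by row (increasing j) by u_h(x) = (Σ_{y ∈ A⁻_r} w(y) u_h(x + yh)) / (Σ_{y ∈ A⁻_r} w(y)), with u_h = u on the boundary data region {j ≤ 0}. Then for all 1 ≤ i,j ≤ N, |u_h(ih,jh) − u(ih,jh)| ≤ j·D·r²·h². -/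

import Mathlib

open Finset

/-- Second-order Taylor-type bound from a uniform Hessian bound. -/
lemma taylor2_bound (u : ℝ × ℝ → ℝ) (hu : ContDiff ℝ 2 u) (D : ℝ)
    (hHess : ∀ x : ℝ × ℝ, ‖iteratedFDeriv ℝ 2 u x‖ ≤ D) (x v : ℝ × ℝ) :
    |u (x + v) - u x - fderiv ℝ u x v| ≤ D * ‖v‖ ^ 2 := by
  have hD0 : 0 ≤ D := (norm_nonneg _).trans (hHess x)
  have hudiff : Differentiable ℝ u := hu.differentiable (by norm_num)
  have hFd : Differentiable ℝ (fderiv ℝ u) :=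
    (hu.fderiv_right (m := 1) (le_refl 2)).differentiable (by norm_num)
  have key : ∀ z : ℝ × ℝ, ‖fderiv ℝ (fderiv ℝ u) z‖ ≤ D := by
    intro z
    refine ContinuousLinearMap.opNorm_le_bound _ hD0 (fun a => ?_)
    refine ContinuousLinearMap.opNorm_le_bound _ (by positivity) (fun b => ?_)
    have h2 := (iteratedFDeriv ℝ 2 u z).le_opNorm ![a, b]
    rw [iteratedFDeriv_two_apply] at h2
    simp only [Matrix.cons_val_zero, Matrix.cons_val_one, Matrix.head_cons,
      Fin.prod_univ_two] at h2
    calc ‖fderiv ℝ (fderiv ℝ u) z a b‖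
        ≤ ‖iteratedFDeriv ℝ 2 u z‖ * (‖a‖ * ‖b‖) := by
          simpa [mul_assoc] using h2
      _ ≤ D * (‖a‖ * ‖b‖) :=
          mul_le_mul_of_nonneg_right (hHess z) (by positivity)
      _ = D * ‖a‖ * ‖b‖ := by ring
  have lip : ∀ a b : ℝ × ℝ, ‖fderiv ℝ u b - fderiv ℝ u a‖ ≤ D * ‖b - a‖ := by
    intro a b
    exact convex_univ.norm_image_sub_le_of_norm_fderiv_le (fun z _ => hFd z)
      (fun z _ => key z) trivial trivial
  set L := fderiv ℝ u x with hL
  have hgdiff : ∀ z ∈ Metric.closedBall x ‖v‖,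
      DifferentiableAt ℝ (fun z => u z - L z) z :=
    fun z _ => (hudiff z).sub (L.differentiableAt)
  have hgderiv : ∀ z : ℝ × ℝ, fderiv ℝ (fun z => u z - L z) z = fderiv ℝ u z - L := by
    intro z
    rw [fderiv_fun_sub (hudiff z) L.differentiableAt, L.fderiv]
  have hbound : ∀ z ∈ Metric.closedBall x ‖v‖,
      ‖fderiv ℝ (fun z => u z - L z) z‖ ≤ D * ‖v‖ := by
    intro z hz
    rw [hgderiv z]
    calc ‖fderiv ℝ u z - L‖ ≤ D * ‖z - x‖ := lip x z
      _ ≤ D * ‖v‖ := by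
          have : ‖z - x‖ ≤ ‖v‖ := by
            simpa [dist_eq_norm] using hz
          exact mul_le_mul_of_nonneg_left this hD0
  have hmem1 : x ∈ Metric.closedBall x ‖v‖ := Metric.mem_closedBall_self (norm_nonneg v)
  have hmem2 : x + v ∈ Metric.closedBall x ‖v‖ := by
    simp [Metric.mem_closedBall, dist_eq_norm]
  have hmvt := (convex_closedBall x ‖v‖).norm_image_sub_le_of_norm_fderiv_le
    hgdiff hbound hmem1 hmem2
  have heq : (u (x + v) - L (x + v)) - (u x - L x) = u (x + v) - u x - L v := by
    have : L (x + v) = L x + L v := by rw [map_add]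
    rw [this]; ring
  have hnorm : ‖x + v - x‖ = ‖v‖ := by simp
  rw [heq, hnorm] at hmvt
  calc |u (x + v) - u x - L v| ≤ D * ‖v‖ * ‖v‖ := hmvt
    _ = D * ‖v‖ ^ 2 := by ring

theorem stmt_3 (N : ℕ) (hN : 1 ≤ N) (h : ℝ) (hh : h = 1 / N)
    (r : ℤ) (hr : 2 ≤ r)
    (A : Finset (ℝ × ℝ)) (hA : A.Nonempty)
    (hAnorm : ∀ y ∈ A, Real.sqrt (y.1 ^ 2 + y.2 ^ 2) ≤ (r : ℝ))
    (hAlow : ∀ y ∈ A, y.2 ≤ -1)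
    (w : ℝ × ℝ → ℝ) (hw : ∀ y ∈ A, 0 < w y)
    (u : ℝ × ℝ → ℝ) (hu : ContDiff ℝ 2 u)
    (D : ℝ) (hHess : ∀ x : ℝ × ℝ, ‖iteratedFDeriv ℝ 2 u x‖ ≤ D)
    (gstar : ℝ × ℝ) (hg : gstar = (∑ y ∈ A, w y)⁻¹ • ∑ y ∈ A, w y • y)
    (htransport : ∀ x : ℝ × ℝ, fderiv ℝ u x gstar = 0)
    (uh : ℝ × ℝ → ℝ)
    (hbdry : ∀ x : ℝ × ℝ, x.2 ≤ 0 → uh x = u x)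
    (hrec : ∀ x : ℝ × ℝ, 0 < x.2 →
      uh x = (∑ y ∈ A, w y)⁻¹ * ∑ y ∈ A, w y * uh (x + h • y)) :
    ∀ i j : ℕ, 1 ≤ i → i ≤ N → 1 ≤ j → j ≤ N →
      |uh ((i : ℝ) * h, (j : ℝ) * h) - u ((i : ℝ) * h, (j : ℝ) * h)| ≤
        (j : ℝ) * D * (r : ℝ) ^ 2 * h ^ 2 := by
  have hD0 : 0 ≤ D := (norm_nonneg _).trans (hHess 0)
  have hNpos : (0 : ℝ) < N := by exact_mod_cast hN
  have hhpos : 0 < h := by rw [hh]; positivity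
  have hr0 : (0 : ℝ) ≤ (r : ℝ) := by
    have : (2 : ℤ) ≤ r := hr
    exact_mod_cast le_trans (by norm_num) this
  set S := ∑ y ∈ A, w y with hS
  have hSpos : 0 < S := Finset.sum_pos hw hA
  -- norm bound on stencil points
  have hynorm : ∀ y ∈ A, ‖y‖ ≤ (r : ℝ) := by
    intro y hy
    have h1 : |y.1| ≤ Real.sqrt (y.1 ^ 2 + y.2 ^ 2) := by
      rw [← Real.sqrt_sq_eq_abs]
      exact Real.sqrt_le_sqrt (by nlinarith [sq_nonneg y.2])
    have h2 : |y.2| ≤ Real.sqrt (y.1 ^ 2 + y.2 ^ 2) := by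
      rw [← Real.sqrt_sq_eq_abs]
      exact Real.sqrt_le_sqrt (by nlinarith [sq_nonneg y.1])
    have := hAnorm y hy
    rw [Prod.norm_def]
    simp only [Real.norm_eq_abs]
    exact max_le (h1.trans this) (h2.trans this)
  -- the key induction
  have main : ∀ j : ℕ, ∀ x : ℝ × ℝ, x.2 ≤ (j : ℝ) * h →
      |uh x - u x| ≤ (j : ℝ) * D * (r : ℝ) ^ 2 * h ^ 2 := by
    intro j
    induction j with
    | zero =>
        intro x hx
        rw [hbdry x (by simpa using hx)]
        simp
    | succ j ih =>
        intro x hx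
        by_cases hx2 : x.2 ≤ 0
        · rw [hbdry x hx2]
          simp only [sub_self, abs_zero]
          positivity
        · push_neg at hx2
          -- linear term vanishes
          have hSne : S ≠ 0 := hSpos.ne'
          have hlin : ∑ y ∈ A, w y * fderiv ℝ u x (h • y) = 0 := by
            have hmap : ∑ y ∈ A, w y * fderiv ℝ u x (h • y)
                = fderiv ℝ u x (∑ y ∈ A, w y • (h • y)) := by
              rw [map_sum]
              refine Finset.sum_congr rfl (fun y _ => ?_)
              rw [map_smul]; simp [smul_eq_mul]
            have hsum : ∑ y ∈ A, w y • (h • y) = (h * S) • gstar := by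
              have h1 : ∑ y ∈ A, w y • (h • y) = h • ∑ y ∈ A, w y • y := by
                rw [Finset.smul_sum]
                exact Finset.sum_congr rfl fun y _ => smul_comm _ _ _
              rw [h1, hg, smul_smul]
              congr 1
              field_simp
            rw [hmap, hsum, map_smul, htransport x, smul_zero]
          -- the algebraic identity
          have hid : uh x - u x = S⁻¹ * ∑ y ∈ A, w y *
              ((uh (x + h • y) - u (x + h • y)) +
               (u (x + h • y) - u x - fderiv ℝ u x (h • y))) := by
            rw [hrec x hx2]
            have expand : ∀ y ∈ A, w y * uh (x + h • y) = w y *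
                ((uh (x + h • y) - u (x + h • y)) +
                 (u (x + h • y) - u x - fderiv ℝ u x (h • y)))
                + w y * u x + w y * fderiv ℝ u x (h • y) := fun y _ => by ring
            rw [Finset.sum_congr rfl expand, Finset.sum_add_distrib,
              Finset.sum_add_distrib, hlin, add_zero, ← Finset.sum_mul,
              mul_add, inv_mul_cancel_left₀ hSne]
            ring
          set C : ℝ := (j : ℝ) * D * (r : ℝ) ^ 2 * h ^ 2 + D * (r : ℝ) ^ 2 * h ^ 2
            with hC
          -- per-term bound
          have hterm : ∀ y ∈ A, |w y *
              ((uh (x + h • y) - u (x + h • y)) +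
               (u (x + h • y) - u x - fderiv ℝ u x (h • y)))| ≤ w y * C := by
            intro y hy
            have hz : (x + h • y).2 ≤ (j : ℝ) * h := by
              have h2 : (x + h • y).2 = x.2 + h * y.2 := rfl
              have hy2 := hAlow y hy
              push_cast at hx
              nlinarith
            have hIH := ih (x + h • y) hz
            have hT := taylor2_bound u hu D hHess x (h • y)
            have hTy : D * ‖h • y‖ ^ 2 ≤ D * (r : ℝ) ^ 2 * h ^ 2 := by
              have hn : ‖h • y‖ ≤ h * (r : ℝ) := by
                rw [norm_smul, Real.norm_eq_abs, abs_of_pos hhpos]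
                exact mul_le_mul_of_nonneg_left (hynorm y hy) hhpos.le
              have hn0 : 0 ≤ ‖h • y‖ := norm_nonneg _
              have hsq : ‖h • y‖ ^ 2 ≤ (h * (r : ℝ)) ^ 2 := pow_le_pow_left₀ hn0 hn 2
              nlinarith [mul_le_mul_of_nonneg_left hsq hD0]
            rw [abs_mul, abs_of_pos (hw y hy)]
            refine mul_le_mul_of_nonneg_left ?_ (hw y hy).le
            calc |(uh (x + h • y) - u (x + h • y)) +
                    (u (x + h • y) - u x - fderiv ℝ u x (h • y))|
                ≤ |uh (x + h • y) - u (x + h • y)| +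
                  |u (x + h • y) - u x - fderiv ℝ u x (h • y)| := abs_add_le _ _
              _ ≤ (j : ℝ) * D * (r : ℝ) ^ 2 * h ^ 2 + D * (r : ℝ) ^ 2 * h ^ 2 :=
                  add_le_add hIH (hT.trans hTy)
          calc |uh x - u x|
              = |S⁻¹| * |∑ y ∈ A, w y *
                  ((uh (x + h • y) - u (x + h • y)) +
                   (u (x + h • y) - u x - fderiv ℝ u x (h • y)))| := by
                rw [hid, abs_mul]
            _ ≤ S⁻¹ * (S * C) := by
                rw [abs_of_pos (inv_pos.mpr hSpos)]
                refine mul_le_mul_of_nonneg_left ?_ (inv_pos.mpr hSpos).le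
                calc |∑ y ∈ A, w y *
                      ((uh (x + h • y) - u (x + h • y)) +
                       (u (x + h • y) - u x - fderiv ℝ u x (h • y)))|
                    ≤ ∑ y ∈ A, |w y *
                      ((uh (x + h • y) - u (x + h • y)) +
                       (u (x + h • y) - u x - fderiv ℝ u x (h • y)))| :=
                      Finset.abs_sum_le_sum_abs _ _
                  _ ≤ ∑ y ∈ A, w y * C := Finset.sum_le_sum hterm
                  _ = S * C := by rw [← Finset.sum_mul]
            _ = C := inv_mul_cancel_left₀ hSne _
            _ = ((j : ℕ) + 1 : ℝ) * D * (r : ℝ) ^ 2 * h ^ 2 := by rw [hC]; ring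
            _ = ((j + 1 : ℕ) : ℝ) * D * (r : ℝ) ^ 2 * h ^ 2 := by push_cast; ring
  intro i j hi1 hi2 hj1 hj2
  exact main j ((i : ℝ) * h, (j : ℝ) * h) le_rfl
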